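/- Let n ∈ ℕ, c > 0, and let u, v ∈ ℝⁿ be nonzero vectors with c‖u‖² < 1 and c‖v‖² < 1. Then equality ⟨log₀(u), log₀(v)⟩ = ½·(d(0,u)² + d(0,v)² − d(u,v)²) holds if and only if u and v are linearly dependent, i.e. if and only if the angle β between u and v satisfies cos β = ±1 (equivalently, v = t·u for some nonzero real t). -/

import Mathlib

open Real
open scoped Classical

/-- Real inverse hyperbolic tangent. -/
noncomputable def artanh (x : ℝ) : ℝ := (1 / 2) * Real.log ((1 + x) / (1 - x))

/-- Möbius addition on the Poincaré ball of curvature `c`. -/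
noncomputable def mobiusAdd {n : ℕ} (c : ℝ) (u v : EuclideanSpace ℝ (Fin n)) :
    EuclideanSpace ℝ (Fin n) :=
  (1 + 2 * c * (inner ℝ u v : ℝ) + c ^ 2 * ‖u‖ ^ 2 * ‖v‖ ^ 2)⁻¹ •
    ((1 + 2 * c * (inner ℝ u v : ℝ) + c * ‖v‖ ^ 2) • u + (1 - c * ‖u‖ ^ 2) • v)

/-- Logarithmic map at the origin of the Poincaré ball of curvature `c`. -/
noncomputable def plog {n : ℕ} (c : ℝ) (v : EuclideanSpace ℝ (Fin n)) :
    EuclideanSpace ℝ (Fin n) :=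
  if v = 0 then 0 else (_root_.artanh (Real.sqrt c * ‖v‖) / (Real.sqrt c * ‖v‖)) • v

/-- Exponential map at the origin of the Poincaré ball of curvature `c`. -/
noncomputable def pexp {n : ℕ} (c : ℝ) (x : EuclideanSpace ℝ (Fin n)) :
    EuclideanSpace ℝ (Fin n) :=
  if x = 0 then 0 else (Real.tanh (Real.sqrt c * ‖x‖) / (Real.sqrt c * ‖x‖)) • x

/-- The (rescaled) Poincaré distance of curvature `c`. -/
noncomputable def pdist {n : ℕ} (c : ℝ) (u v : EuclideanSpace ℝ (Fin n)) : ℝ :=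
  (1 / Real.sqrt c) * _root_.artanh (Real.sqrt c * ‖mobiusAdd c (-u) v‖)

section Aux
open Real Set

lemma sinh_lt_mul_cosh {x : ℝ} (hx : 0 < x) : Real.sinh x < x * Real.cosh x := by
  have key : StrictMonoOn (fun y => y * Real.cosh y - Real.sinh y) (Ici 0) := by
    refine strictMonoOn_of_deriv_pos (convex_Ici 0) (by fun_prop) ?_
    intro y hy
    rw [interior_Ici] at hy
    have hd : HasDerivAt (fun y => y * Real.cosh y - Real.sinh y)
        (1 * Real.cosh y + y * Real.sinh y - Real.cosh y) y :=
      ((hasDerivAt_id y).mul (Real.hasDerivAt_cosh y)).sub (Real.hasDerivAt_sinh y)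
    rw [hd.deriv]
    have h1 := Real.sinh_pos_iff.2 hy
    have hy' : (0:ℝ) < y := hy
    nlinarith
  have h := key (self_mem_Ici) (le_of_lt hx : (0:ℝ) ≤ x) hx
  simpa using h

lemma strictMonoOn_sinh_div : StrictMonoOn (fun y => Real.sinh y / y) (Ioi (0:ℝ)) := by
  refine strictMonoOn_of_deriv_pos (convex_Ioi 0) ?_ ?_
  · exact Real.continuous_sinh.continuousOn.div continuousOn_id (fun y hy => ne_of_gt hy)
  · intro y hy
    rw [interior_Ioi] at hy
    have hy0 : y ≠ 0 := ne_of_gt hy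
    have hd : HasDerivAt (fun y => Real.sinh y / y)
        ((Real.cosh y * y - Real.sinh y * 1) / y ^ 2) y :=
      (Real.hasDerivAt_sinh y).div (hasDerivAt_id y) hy0
    rw [hd.deriv]
    have h1 := sinh_lt_mul_cosh hy
    have h2 : (0:ℝ) < y ^ 2 := by positivity
    apply div_pos (by nlinarith) h2

lemma strictConvexOn_cosh_sqrt : StrictConvexOn ℝ (Ici (0:ℝ)) (fun x => Real.cosh (Real.sqrt x)) := by
  refine StrictMonoOn.strictConvexOn_of_deriv (convex_Ici 0) (by fun_prop) ?_
  rw [interior_Ici]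
  have hderiv : ∀ y ∈ Ioi (0:ℝ), deriv (fun x => Real.cosh (Real.sqrt x)) y
      = Real.sinh (Real.sqrt y) * (1 / (2 * Real.sqrt y)) := by
    intro y hy
    exact ((Real.hasDerivAt_sqrt (ne_of_gt hy)).cosh).deriv
  intro a ha b hb hab
  rw [hderiv a ha, hderiv b hb]
  have ha' : (0:ℝ) < Real.sqrt a := Real.sqrt_pos.2 ha
  have hb' : (0:ℝ) < Real.sqrt b := Real.sqrt_pos.2 hb
  have hs : Real.sqrt a < Real.sqrt b := Real.sqrt_lt_sqrt (le_of_lt ha) hab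
  have := strictMonoOn_sinh_div (mem_Ioi.2 ha') (mem_Ioi.2 hb') hs
  simp only [] at this
  rw [div_eq_mul_inv, div_eq_mul_inv] at this
  calc Real.sinh (Real.sqrt a) * (1 / (2 * Real.sqrt a))
      = (Real.sinh (Real.sqrt a) * (Real.sqrt a)⁻¹) / 2 := by
        field_simp
    _ < (Real.sinh (Real.sqrt b) * (Real.sqrt b)⁻¹) / 2 := by linarith
    _ = Real.sinh (Real.sqrt b) * (1 / (2 * Real.sqrt b)) := by field_simp

lemma artanh_pos {x : ℝ} (h0 : 0 < x) (h1 : x < 1) : 0 < _root_.artanh x := by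
  have h : (1:ℝ) < (1 + x) / (1 - x) := by
    rw [lt_div_iff₀ (by linarith)]; linarith
  have := Real.log_pos h
  unfold _root_.artanh; linarith

lemma artanh_nonneg {x : ℝ} (h0 : 0 ≤ x) (h1 : x < 1) : 0 ≤ _root_.artanh x := by
  rcases eq_or_lt_of_le h0 with h | h
  · simp [_root_.artanh, ← h]
  · exact le_of_lt (artanh_pos h h1)

lemma two_artanh {x : ℝ} : 2 * _root_.artanh x = Real.log ((1 + x) / (1 - x)) := by
  unfold _root_.artanh; ring

lemma cosh_two_artanh {x : ℝ} (h1 : -1 < x) (h2 : x < 1) :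
    Real.cosh (2 * _root_.artanh x) = (1 + x ^ 2) / (1 - x ^ 2) := by
  have ha : (0:ℝ) < 1 + x := by linarith
  have hb : (0:ℝ) < 1 - x := by linarith
  have hz : (0:ℝ) < (1 + x) / (1 - x) := div_pos ha hb
  have hsq : (1:ℝ) - x ^ 2 ≠ 0 := by nlinarith
  rw [two_artanh, Real.cosh_eq, Real.exp_log hz, Real.exp_neg, Real.exp_log hz]
  field_simp [ha.ne', hb.ne']
  ring

lemma sinh_two_artanh {x : ℝ} (h1 : -1 < x) (h2 : x < 1) :
    Real.sinh (2 * _root_.artanh x) = 2 * x / (1 - x ^ 2) := by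
  have ha : (0:ℝ) < 1 + x := by linarith
  have hb : (0:ℝ) < 1 - x := by linarith
  have hz : (0:ℝ) < (1 + x) / (1 - x) := div_pos ha hb
  have hsq : (1:ℝ) - x ^ 2 ≠ 0 := by nlinarith
  rw [two_artanh, Real.sinh_eq, Real.exp_log hz, Real.exp_neg, Real.exp_log hz]
  field_simp [ha.ne', hb.ne']
  ring

lemma artanh_sub {x y : ℝ} (hx1 : -1 < x) (hx2 : x < 1) (hy1 : -1 < y) (hy2 : y < 1) :
    _root_.artanh ((x - y) / (1 - x * y)) = _root_.artanh x - _root_.artanh y := by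
  have hax : (0:ℝ) < 1 + x := by linarith
  have hbx : (0:ℝ) < 1 - x := by linarith
  have hay : (0:ℝ) < 1 + y := by linarith
  have hby : (0:ℝ) < 1 - y := by linarith
  have hxy : (0:ℝ) < 1 - x * y := by nlinarith
  have e1 : 1 + (x - y) / (1 - x * y) = (1 + x) * (1 - y) / (1 - x * y) := by
    field_simp; ring
  have e2 : 1 - (x - y) / (1 - x * y) = (1 - x) * (1 + y) / (1 - x * y) := by
    field_simp; ring
  have h2pos : (0:ℝ) < 1 - (x - y) / (1 - x * y) := by rw [e2]; positivity
  have harg : (1 + (x - y) / (1 - x * y)) / (1 - (x - y) / (1 - x * y))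
      = ((1 + x) / (1 - x)) / ((1 + y) / (1 - y)) := by
    rw [div_eq_div_iff h2pos.ne' (div_pos hay hby).ne']
    field_simp [hbx.ne', hby.ne', hxy.ne']
    ring
  unfold _root_.artanh
  rw [harg, Real.log_div (by positivity) (by positivity)]
  ring
lemma artanh_neg (z : ℝ) : _root_.artanh (-z) = - _root_.artanh z := by
  unfold _root_.artanh
  rw [show (1 + -z) / (1 - -z) = ((1 + z) / (1 - z))⁻¹ by rw [inv_div]; ring_nf,
    Real.log_inv]
  ring

set_option maxHeartbeats 2000000 in
lemma key_scalar {x y w : ℝ} (hx0 : 0 < x) (hx1 : x < 1) (hy0 : 0 < y) (hy1 : y < 1)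
    (hw : |w| ≤ x * y) :
    _root_.artanh x * _root_.artanh y * w / (x * y)
      = 1 / 2 * ((_root_.artanh x) ^ 2 + (_root_.artanh y) ^ 2
          - (_root_.artanh (Real.sqrt ((x ^ 2 + y ^ 2 - 2 * w) / (1 + x ^ 2 * y ^ 2 - 2 * w)))) ^ 2)
    ↔ (w = x * y ∨ w = -(x * y)) := by
  obtain ⟨hwl, hwr⟩ := abs_le.mp hw
  have hxy0 : (0:ℝ) < x * y := mul_pos hx0 hy0
  have hxy1 : x * y < 1 := by nlinarith
  have hM : (0:ℝ) < 1 + x ^ 2 * y ^ 2 - 2 * w := by nlinarith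
  have hN : (0:ℝ) ≤ x ^ 2 + y ^ 2 - 2 * w := by nlinarith [sq_nonneg (x - y)]
  set r : ℝ := Real.sqrt ((x ^ 2 + y ^ 2 - 2 * w) / (1 + x ^ 2 * y ^ 2 - 2 * w)) with hrdef
  have hr0 : 0 ≤ r := Real.sqrt_nonneg _
  have hr2 : r ^ 2 = (x ^ 2 + y ^ 2 - 2 * w) / (1 + x ^ 2 * y ^ 2 - 2 * w) := by
    rw [hrdef, Real.sq_sqrt (div_nonneg hN hM.le)]
  have hr1 : r < 1 := by
    have hNM : x ^ 2 + y ^ 2 - 2 * w < 1 + x ^ 2 * y ^ 2 - 2 * w := by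
      nlinarith [mul_pos (show (0:ℝ) < 1 - x ^ 2 by nlinarith) (show (0:ℝ) < 1 - y ^ 2 by nlinarith)]
    have : r ^ 2 < 1 := by rw [hr2]; exact (div_lt_one hM).mpr hNM
    nlinarith
  set A := _root_.artanh x with hAdef
  set B := _root_.artanh y with hBdef
  have hA : 0 < A := artanh_pos hx0 hx1
  have hB : 0 < B := artanh_pos hy0 hy1
  constructor
  · -- hard direction
    intro heq
    by_contra hne
    push_neg at hne
    obtain ⟨hne1, hne2⟩ := hne
    have hwlt : |w| < x * y := lt_of_le_of_ne hw (by
      intro h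
      rcases abs_eq (le_of_lt hxy0) |>.mp h with h' | h'
      · exact hne1 h'
      · exact hne2 h')
    obtain ⟨hwl', hwr'⟩ := abs_lt.mp hwlt
    set γ : ℝ := w / (x * y) with hγdef
    have hγ1 : -1 < γ := by rw [hγdef, lt_div_iff₀ hxy0]; linarith
    have hγ2 : γ < 1 := by rw [hγdef, div_lt_one hxy0]; linarith
    have hγw : γ * (x * y) = w := div_mul_cancel₀ w hxy0.ne'
    set D := _root_.artanh r with hDdef
    have hD0 : 0 ≤ D := artanh_nonneg hr0 hr1
    have hD2 : D ^ 2 = A ^ 2 + B ^ 2 - 2 * A * B * γ := by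
      have h2 : A * B * w / (x * y) = A * B * γ := by
        rw [hγdef]; ring
      rw [h2] at heq
      linarith
    -- convexity gives strict inequality
    set lam : ℝ := (1 + γ) / 2 with hlam
    set mu : ℝ := (1 - γ) / 2 with hmu
    have hlam0 : 0 < lam := by rw [hlam]; linarith
    have hmu0 : 0 < mu := by rw [hmu]; linarith
    have hsum : lam + mu = 1 := by rw [hlam, hmu]; ring
    have hp1 : (2 * A - 2 * B) ^ 2 ∈ Ici (0:ℝ) := mem_Ici.mpr (sq_nonneg _)
    have hp2 : (2 * A + 2 * B) ^ 2 ∈ Ici (0:ℝ) := mem_Ici.mpr (sq_nonneg _)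
    have hpne : (2 * A - 2 * B) ^ 2 ≠ (2 * A + 2 * B) ^ 2 := by nlinarith
    have hconv := strictConvexOn_cosh_sqrt.2 hp1 hp2 hpne hlam0 hmu0 hsum
    simp only [smul_eq_mul] at hconv
    have harg : lam * (2 * A - 2 * B) ^ 2 + mu * (2 * A + 2 * B) ^ 2 = (2 * D) ^ 2 := by
      rw [hlam, hmu]
      linear_combination (-4 : ℝ) * hD2
    rw [harg, Real.sqrt_sq (by linarith : (0:ℝ) ≤ 2 * D), Real.sqrt_sq_eq_abs,
      Real.sqrt_sq (by linarith : (0:ℝ) ≤ 2 * A + 2 * B), Real.cosh_abs] at hconv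
    -- now compute both sides in closed form
    have hx2 : (0:ℝ) < 1 - x ^ 2 := by
      have := pow_lt_one₀ (le_of_lt hx0) hx1 (two_ne_zero); linarith
    have hy2 : (0:ℝ) < 1 - y ^ 2 := by
      have := pow_lt_one₀ (le_of_lt hy0) hy1 (two_ne_zero); linarith
    have hr2' : (0:ℝ) < 1 - r ^ 2 := by
      have := pow_lt_one₀ hr0 hr1 (two_ne_zero); linarith
    have hcD : Real.cosh (2 * D) = (1 + r ^ 2) / (1 - r ^ 2) :=
      cosh_two_artanh (by linarith) hr1
    have hcA : Real.cosh (2 * A) = (1 + x ^ 2) / (1 - x ^ 2) :=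
      cosh_two_artanh (by linarith) hx1
    have hcB : Real.cosh (2 * B) = (1 + y ^ 2) / (1 - y ^ 2) :=
      cosh_two_artanh (by linarith) hy1
    have hsA : Real.sinh (2 * A) = 2 * x / (1 - x ^ 2) :=
      sinh_two_artanh (by linarith) hx1
    have hsB : Real.sinh (2 * B) = 2 * y / (1 - y ^ 2) :=
      sinh_two_artanh (by linarith) hy1
    have hexp : lam * Real.cosh (2 * A - 2 * B) + mu * Real.cosh (2 * A + 2 * B)
        = Real.cosh (2 * A) * Real.cosh (2 * B) - γ * (Real.sinh (2 * A) * Real.sinh (2 * B)) := by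
      rw [Real.cosh_sub, Real.cosh_add, hlam, hmu]; ring
    have hlaw : (1 + r ^ 2) / (1 - r ^ 2)
        = Real.cosh (2 * A) * Real.cosh (2 * B) - γ * (Real.sinh (2 * A) * Real.sinh (2 * B)) := by
      rw [hcA, hcB, hsA, hsB]
      have h1r : 1 - r ^ 2 = (1 - x ^ 2) * (1 - y ^ 2) / (1 + x ^ 2 * y ^ 2 - 2 * w) := by
        rw [hr2]; field_simp; ring
      have h1r' : 1 + r ^ 2 = ((1 + x ^ 2) * (1 + y ^ 2) - 4 * w) / (1 + x ^ 2 * y ^ 2 - 2 * w) := by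
        rw [hr2]; field_simp; ring
      rw [h1r, h1r', div_div_div_comm, div_self hM.ne', div_one, hγdef]
      field_simp
      ring
    rw [hcD, hexp, hlaw] at hconv
    exact lt_irrefl _ hconv
  · -- easy direction
    rintro (rfl | rfl)
    · -- w = x * y
      have hden : (0:ℝ) < 1 - x * y := by linarith
      have hz1 : -1 < (x - y) / (1 - x * y) := by
        rw [neg_lt, ← neg_div, div_lt_one hden]; nlinarith
      have hz2 : (x - y) / (1 - x * y) < 1 := by
        rw [div_lt_one hden]; nlinarith
      have hz : _root_.artanh ((x - y) / (1 - x * y)) = A - B :=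
        artanh_sub (by linarith) hx1 (by linarith) hy1
      have hrval : r = |(x - y) / (1 - x * y)| := by
        rw [hrdef, show (x ^ 2 + y ^ 2 - 2 * (x * y)) / (1 + x ^ 2 * y ^ 2 - 2 * (x * y))
            = ((x - y) / (1 - x * y)) ^ 2 by rw [div_pow]; congr 1 <;> ring,
          Real.sqrt_sq_eq_abs]
      have hD2 : (_root_.artanh r) ^ 2 = (A - B) ^ 2 := by
        rw [hrval]
        rcases abs_choice ((x - y) / (1 - x * y)) with h | h
        · rw [h, hz]
        · rw [h, _root_.artanh_neg, hz]; ring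
      rw [hD2, mul_div_assoc, div_self hxy0.ne', mul_one]
      ring
    · -- w = -(x * y)
      have hden : (0:ℝ) < 1 + x * y := by linarith
      have hz1 : -1 < (x + y) / (1 + x * y) := by
        rw [neg_lt, ← neg_div, div_lt_one hden]; nlinarith
      have hz2 : (x + y) / (1 + x * y) < 1 := by
        rw [div_lt_one hden]; nlinarith
      have hz : _root_.artanh ((x + y) / (1 + x * y)) = A + B := by
        have h := artanh_sub (show -1 < x by linarith) hx1
          (show -1 < -y by linarith) (show -y < 1 by linarith)
        rw [show (x - -y) / (1 - x * -y) = (x + y) / (1 + x * y) by ring_nf, _root_.artanh_neg] at h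
        rw [h, hBdef]; ring
      have hrval : r = |(x + y) / (1 + x * y)| := by
        rw [hrdef, show (x ^ 2 + y ^ 2 - 2 * -(x * y)) / (1 + x ^ 2 * y ^ 2 - 2 * -(x * y))
            = ((x + y) / (1 + x * y)) ^ 2 by rw [div_pow]; congr 1 <;> ring,
          Real.sqrt_sq_eq_abs]
      have hD2 : (_root_.artanh r) ^ 2 = (A + B) ^ 2 := by
        rw [hrval]
        rcases abs_choice ((x + y) / (1 + x * y)) with h | h
        · rw [h, hz]
        · rw [h, _root_.artanh_neg, hz]; ring
      rw [hD2, show A * B * -(x * y) / (x * y) = -(A * B) * (x * y / (x * y)) by ring,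
        div_self hxy0.ne', mul_one]
      ring
lemma mobiusAdd_zero_left {n : ℕ} (c : ℝ) (u : EuclideanSpace ℝ (Fin n)) :
    mobiusAdd c 0 u = u := by
  simp [mobiusAdd]

lemma norm_mobiusAdd_neg_sq {n : ℕ} (c : ℝ) (u v : EuclideanSpace ℝ (Fin n))
    (hd : (0:ℝ) < 1 - 2 * c * (inner ℝ u v : ℝ) + c ^ 2 * ‖u‖ ^ 2 * ‖v‖ ^ 2) :
    ‖mobiusAdd c (-u) v‖ ^ 2
      = ‖u - v‖ ^ 2 / (1 - 2 * c * (inner ℝ u v : ℝ) + c ^ 2 * ‖u‖ ^ 2 * ‖v‖ ^ 2) := by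
  have hdenom : 1 + 2 * c * (inner ℝ (-u) v : ℝ) + c ^ 2 * ‖(-u)‖ ^ 2 * ‖v‖ ^ 2
      = 1 - 2 * c * (inner ℝ u v : ℝ) + c ^ 2 * ‖u‖ ^ 2 * ‖v‖ ^ 2 := by
    rw [inner_neg_left, norm_neg]; ring
  rw [mobiusAdd, norm_smul, mul_pow, hdenom]
  have hexp : ‖(1 + 2 * c * (inner ℝ (-u) v : ℝ) + c * ‖v‖ ^ 2) • (-u)
        + (1 - c * ‖(-u)‖ ^ 2) • v‖ ^ 2
      = (1 - 2 * c * (inner ℝ u v : ℝ) + c * ‖v‖ ^ 2) ^ 2 * ‖u‖ ^ 2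
        - 2 * (1 - 2 * c * (inner ℝ u v : ℝ) + c * ‖v‖ ^ 2) * (1 - c * ‖u‖ ^ 2) * (inner ℝ u v : ℝ)
        + (1 - c * ‖u‖ ^ 2) ^ 2 * ‖v‖ ^ 2 := by
    rw [@norm_add_sq_real]
    simp only [norm_smul, real_inner_smul_left, real_inner_smul_right, inner_neg_left,
      norm_neg, Real.norm_eq_abs, mul_pow, sq_abs]
    ring
  rw [hexp, @norm_sub_sq_real]
  have hkey : (1 - 2 * c * (inner ℝ u v : ℝ) + c * ‖v‖ ^ 2) ^ 2 * ‖u‖ ^ 2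
        - 2 * (1 - 2 * c * (inner ℝ u v : ℝ) + c * ‖v‖ ^ 2) * (1 - c * ‖u‖ ^ 2) * (inner ℝ u v : ℝ)
        + (1 - c * ‖u‖ ^ 2) ^ 2 * ‖v‖ ^ 2
      = (1 - 2 * c * (inner ℝ u v : ℝ) + c ^ 2 * ‖u‖ ^ 2 * ‖v‖ ^ 2)
          * (‖u‖ ^ 2 - 2 * (inner ℝ u v : ℝ) + ‖v‖ ^ 2) := by
    ring
  rw [hkey, Real.norm_eq_abs, sq_abs]
  have hgen : ∀ d S : ℝ, d ≠ 0 → (d⁻¹) ^ 2 * (d * S) = S / d := by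
    intro d S hd0; field_simp
  exact hgen _ _ hd.ne'

end Aux

open Real Set

set_option maxHeartbeats 1000000 in
/-- Equality in Theorem 4.1's inequality holds iff `u` and `v` are linearly
dependent, i.e. `v = t • u` for some nonzero real `t` (equivalently `cos β = ±1`). -/
theorem projected_inner_eq_geodesic_inner_iff {n : ℕ} (c : ℝ) (hc : 0 < c)
    (u v : EuclideanSpace ℝ (Fin n)) (hu0 : u ≠ 0) (hv0 : v ≠ 0)
    (hu : c * ‖u‖ ^ 2 < 1) (hv : c * ‖v‖ ^ 2 < 1) :
    (inner ℝ (plog c u) (plog c v) : ℝ) =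
        (1 / 2) * (pdist c 0 u ^ 2 + pdist c 0 v ^ 2 - pdist c u v ^ 2) ↔
      ∃ t : ℝ, t ≠ 0 ∧ v = t • u := by
  have hcs : Real.sqrt c * Real.sqrt c = c := Real.mul_self_sqrt hc.le
  have hsc0 : (0:ℝ) < Real.sqrt c := Real.sqrt_pos.mpr hc
  have hnu : (0:ℝ) < ‖u‖ := norm_pos_iff.mpr hu0
  have hnv : (0:ℝ) < ‖v‖ := norm_pos_iff.mpr hv0
  set x : ℝ := Real.sqrt c * ‖u‖ with hxdef
  set y : ℝ := Real.sqrt c * ‖v‖ with hydef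
  set w : ℝ := c * (inner ℝ u v : ℝ) with hwdef
  have hx2 : x ^ 2 = c * ‖u‖ ^ 2 := by rw [hxdef, mul_pow, Real.sq_sqrt hc.le]
  have hy2 : y ^ 2 = c * ‖v‖ ^ 2 := by rw [hydef, mul_pow, Real.sq_sqrt hc.le]
  have hx0 : 0 < x := mul_pos hsc0 hnu
  have hy0 : 0 < y := mul_pos hsc0 hnv
  have hx1 : x < 1 := by nlinarith [hx2]
  have hy1 : y < 1 := by nlinarith [hy2]
  have hxyc : x * y = c * (‖u‖ * ‖v‖) := by
    rw [hxdef, hydef, show Real.sqrt c * ‖u‖ * (Real.sqrt c * ‖v‖)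
      = Real.sqrt c * Real.sqrt c * (‖u‖ * ‖v‖) by ring, hcs]
  have hCS : |(inner ℝ u v : ℝ)| ≤ ‖u‖ * ‖v‖ := abs_real_inner_le_norm u v
  have hw : |w| ≤ x * y := by
    rw [hwdef, abs_mul, abs_of_pos hc, hxyc]
    exact mul_le_mul_of_nonneg_left hCS hc.le
  obtain ⟨hwl, hwr⟩ := abs_le.mp hw
  have hxy0 : (0:ℝ) < x * y := mul_pos hx0 hy0
  -- distance to origin
  have hpd0u : pdist c 0 u = 1 / Real.sqrt c * _root_.artanh x := by
    rw [pdist, neg_zero, mobiusAdd_zero_left]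
  have hpd0v : pdist c 0 v = 1 / Real.sqrt c * _root_.artanh y := by
    rw [pdist, neg_zero, mobiusAdd_zero_left]
  -- distance between u and v
  have hd : (0:ℝ) < 1 - 2 * c * (inner ℝ u v : ℝ) + c ^ 2 * ‖u‖ ^ 2 * ‖v‖ ^ 2 := by
    have h1 : 1 - 2 * c * (inner ℝ u v : ℝ) + c ^ 2 * ‖u‖ ^ 2 * ‖v‖ ^ 2
        = 1 - 2 * w + (x * y) ^ 2 := by
      rw [hwdef, hxyc]; ring
    have hxy1 : x * y < 1 := by nlinarith
    rw [h1]; nlinarith [sq_nonneg (1 - x * y)]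
  have hM : (0:ℝ) < 1 + x ^ 2 * y ^ 2 - 2 * w := by
    have : 1 + x ^ 2 * y ^ 2 - 2 * w
        = 1 - 2 * c * (inner ℝ u v : ℝ) + c ^ 2 * ‖u‖ ^ 2 * ‖v‖ ^ 2 := by
      rw [hwdef, hx2, hy2]; ring
    rw [this]; exact hd
  have hR : Real.sqrt c * ‖mobiusAdd c (-u) v‖
      = Real.sqrt ((x ^ 2 + y ^ 2 - 2 * w) / (1 + x ^ 2 * y ^ 2 - 2 * w)) := by
    have hRsq : (Real.sqrt c * ‖mobiusAdd c (-u) v‖) ^ 2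
        = (x ^ 2 + y ^ 2 - 2 * w) / (1 + x ^ 2 * y ^ 2 - 2 * w) := by
      rw [mul_pow, Real.sq_sqrt hc.le, norm_mobiusAdd_neg_sq c u v hd, @norm_sub_sq_real,
        ← mul_div_assoc, div_eq_div_iff hd.ne' hM.ne']
      rw [hwdef, hx2, hy2]
      ring
    rw [← Real.sqrt_sq (by positivity : (0:ℝ) ≤ Real.sqrt c * ‖mobiusAdd c (-u) v‖), hRsq]
  have hpduv : pdist c u v = 1 / Real.sqrt c
      * _root_.artanh (Real.sqrt ((x ^ 2 + y ^ 2 - 2 * w) / (1 + x ^ 2 * y ^ 2 - 2 * w))) := by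
    rw [pdist, hR]
  -- the inner ℝ product of logs
  have hinner : (inner ℝ (plog c u) (plog c v) : ℝ)
      = _root_.artanh x / x * (_root_.artanh y / y * (inner ℝ u v : ℝ)) := by
    rw [plog, plog, if_neg hu0, if_neg hv0, real_inner_smul_left, real_inner_smul_right]
  rw [hinner, hpd0u, hpd0v, hpduv]
  have hsq : (1 / Real.sqrt c) ^ 2 = 1 / c := by
    rw [div_pow, one_pow, Real.sq_sqrt hc.le]
  rw [mul_pow, mul_pow, mul_pow, hsq]
  -- reduce to the scalar statement
  have e1 : _root_.artanh x / x * (_root_.artanh y / y * (inner ℝ u v : ℝ))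
      = 1 / c * (_root_.artanh x * _root_.artanh y * w / (x * y)) := by
    rw [hwdef]
    field_simp
  have e2 : (1:ℝ) / 2 * (1 / c * _root_.artanh x ^ 2 + 1 / c * _root_.artanh y ^ 2
        - 1 / c * _root_.artanh (Real.sqrt ((x ^ 2 + y ^ 2 - 2 * w) / (1 + x ^ 2 * y ^ 2 - 2 * w))) ^ 2)
      = 1 / c * (1 / 2 * (_root_.artanh x ^ 2 + _root_.artanh y ^ 2
        - _root_.artanh (Real.sqrt ((x ^ 2 + y ^ 2 - 2 * w) / (1 + x ^ 2 * y ^ 2 - 2 * w))) ^ 2)) := by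
    ring
  rw [e1, e2, mul_right_inj' (show (1:ℝ)/c ≠ 0 by positivity),
    key_scalar hx0 hx1 hy0 hy1 hw]
  -- linear dependence
  constructor
  · rintro (h | h)
    · have hs : (inner ℝ u v : ℝ) = ‖u‖ * ‖v‖ := by
        have h' : c * (inner ℝ u v : ℝ) = c * (‖u‖ * ‖v‖) := by
          rw [← hwdef, h, hxyc]
        exact mul_left_cancel₀ hc.ne' h'
      have habs : ‖(inner ℝ u v : ℝ)‖ = ‖u‖ * ‖v‖ := by
        rw [Real.norm_eq_abs, hs, abs_of_nonneg (by positivity)]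
      exact (norm_inner_eq_norm_iff hu0 hv0).mp habs
    · have hs : (inner ℝ u v : ℝ) = -(‖u‖ * ‖v‖) := by
        have h' : c * (inner ℝ u v : ℝ) = c * (-(‖u‖ * ‖v‖)) := by
          rw [← hwdef, h, hxyc]; ring
        exact mul_left_cancel₀ hc.ne' h'
      have habs : ‖(inner ℝ u v : ℝ)‖ = ‖u‖ * ‖v‖ := by
        rw [Real.norm_eq_abs, hs, abs_neg, abs_of_nonneg (by positivity)]
      exact (norm_inner_eq_norm_iff hu0 hv0).mp habs
  · rintro ⟨t, ht, rfl⟩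
    have hsv : (inner ℝ u (t • u) : ℝ) = t * ‖u‖ ^ 2 := by
      rw [real_inner_smul_right, real_inner_self_eq_norm_sq]
    have hxy' : x * y = c * (|t| * ‖u‖ ^ 2) := by
      rw [hxyc, norm_smul, Real.norm_eq_abs]; ring
    rcases ht.lt_or_gt with hneg | hpos
    · right; rw [hwdef, hsv, hxy', abs_of_neg hneg]; ring
    · left; rw [hwdef, hsv, hxy', abs_of_pos hpos]
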